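/- Let c : ℕ → ℝ be a sequence of coefficients with c_0 = 0 such that the power series ∑_{j≥1} c_j t^j has positive radius of convergence R, and let f(t) = exp(∑_{j=1}^∞ c_j t^j) for |t| < R. Let x be a real number. Then, as r tends to 1 from the right, the infinite product over n = 1, 2, 3, … of f((r − 1) · x / r^n) tends to exp(c_1 · x). -/

import Mathlib

open Filter Topology

/-- Per-`r` identity: the infinite product equals `exp` of the closed-form sum. -/
lemma aux_eq_tfc (c : ℕ → ℝ) (hc0 : c 0 = 0) (R : ℝ) (hR : 0 < R)
    (f : ℝ → ℝ) (hf : ∀ t : ℝ, |t| < R → f t = Real.exp (∑' j : ℕ, c j * t ^ j))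
    (M : ℝ) (hM0 : 0 ≤ M) (hcb : ∀ j, |c j| ≤ M * (2 / R) ^ j)
    (x r : ℝ) (hr : 1 < r) (hsx : (r - 1) * |x| < R / 4) :
    (∏' n : ℕ, f ((r - 1) * x / r ^ (n + 1)))
      = Real.exp (∑' j : ℕ, c j * ((r - 1) * x) ^ j / (r ^ j - 1)) := by
  have hr0 : (0:ℝ) < r := by linarith
  have hr1 : (0:ℝ) < r - 1 := by linarith
  have hinv1 : 1 / r < 1 := by rw [div_lt_one hr0]; linarith
  have hinv0 : (0:ℝ) < 1 / r := by positivity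
  set s := (r - 1) * |x| with hs_def
  have hs0 : 0 ≤ s := by positivity
  set q := 2 * s / R with hq_def
  have hq0 : 0 ≤ q := by positivity
  have hq1 : q < 1 / 2 := by
    rw [hq_def, div_lt_iff₀ hR]; nlinarith
  set a : ℕ → ℕ → ℝ := fun n j => c j * ((r - 1) * x / r ^ (n + 1)) ^ j with ha_def
  have hupow : ∀ n : ℕ, (1:ℝ) ≤ r ^ (n + 1) := fun n => one_le_pow₀ hr.le
  have hupos : ∀ n : ℕ, (0:ℝ) < r ^ (n + 1) := fun n => pow_pos hr0 _
  have hu : ∀ n : ℕ, |(r - 1) * x / r ^ (n + 1)| = s / r ^ (n + 1) := by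
    intro n
    rw [abs_div, abs_of_pos (hupos n), abs_mul, abs_of_pos hr1]
  have huR : ∀ n : ℕ, |(r - 1) * x / r ^ (n + 1)| < R := by
    intro n
    rw [hu n]
    have := div_le_self hs0 (hupow n)
    linarith
  have hbound : ∀ p : ℕ × ℕ, |a p.1 p.2| ≤ (M * q ^ p.2) * (1 / r) ^ (p.1 + 1) := by
    rintro ⟨n, j⟩
    rcases Nat.eq_zero_or_pos j with hj | hj
    · simp only [hj, ha_def, hc0, pow_zero, zero_mul, abs_zero]
      positivity
    · have h1 : |a n j| = |c j| * (s / r ^ (n + 1)) ^ j := by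
        rw [ha_def]
        simp only
        rw [abs_mul, abs_pow, hu n]
      have h2 : |c j| * (s / r ^ (n + 1)) ^ j ≤ (M * (2 / R) ^ j) * (s / r ^ (n + 1)) ^ j := by
        apply mul_le_mul_of_nonneg_right (hcb j)
        positivity
      have h3 : (M * (2 / R) ^ j) * (s / r ^ (n + 1)) ^ j
          = M * (q ^ j * ((1 / r) ^ (n + 1)) ^ j) := by
        have hrne : r ≠ 0 := ne_of_gt hr0
        have hRne : R ≠ 0 := ne_of_gt hR
        rw [← mul_pow, mul_assoc, ← mul_pow]
        congr 2
        rw [hq_def]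
        field_simp
        rw [mul_assoc, ← mul_pow, mul_one_div_cancel hrne, one_pow, mul_one]
      have h4 : ((1 / r) ^ (n + 1)) ^ j ≤ (1 / r) ^ (n + 1) := by
        have h5 : ((1 / r) ^ (n + 1)) ^ j ≤ ((1 / r) ^ (n + 1)) ^ 1 :=
          pow_le_pow_of_le_one (by positivity)
            (by
              rw [div_pow, one_pow, div_le_one (hupos n)]
              exact hupow n) hj
        simpa using h5
      calc |a n j| = |c j| * (s / r ^ (n + 1)) ^ j := h1
        _ ≤ (M * (2 / R) ^ j) * (s / r ^ (n + 1)) ^ j := h2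
        _ = M * (q ^ j * ((1 / r) ^ (n + 1)) ^ j) := h3
        _ ≤ M * (q ^ j * (1 / r) ^ (n + 1)) := by
            apply mul_le_mul_of_nonneg_left _ hM0
            exact mul_le_mul_of_nonneg_left h4 (by positivity)
        _ = (M * q ^ j) * (1 / r) ^ (n + 1) := by ring
  have hgeo_r : Summable (fun n : ℕ => (1 / r) ^ (n + 1)) := by
    have := (summable_geometric_of_lt_one hinv0.le hinv1).mul_right (1 / r)
    exact this.congr fun n => (pow_succ (1 / r) n).symm
  have hgeo_q : Summable (fun j : ℕ => M * q ^ j) :=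
    (summable_geometric_of_lt_one hq0 (by linarith)).mul_left M
  have hsb : Summable (fun p : ℕ × ℕ => (M * q ^ p.2) * (1 / r) ^ (p.1 + 1)) := by
    have := Summable.mul_of_nonneg hgeo_r hgeo_q
      (fun n => by positivity) (fun j => by positivity)
    exact this.congr fun p => mul_comm _ _
  have habs : Summable (fun p : ℕ × ℕ => |a p.1 p.2|) :=
    Summable.of_nonneg_of_le (fun p => abs_nonneg _) hbound hsb
  have hsa : Summable (fun p : ℕ × ℕ => a p.1 p.2) := habs.of_abs
  have hj_tsum : ∀ j : ℕ, (∑' n : ℕ, a n j) = c j * ((r - 1) * x) ^ j / (r ^ j - 1) := by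
    intro j
    rcases Nat.eq_zero_or_pos j with hj | hj
    · simp [hj, ha_def, hc0]
    · have hrj : 1 < r ^ j := one_lt_pow₀ hr hj.ne'
      have hrj0 : (0:ℝ) < r ^ j := by positivity
      have hy1 : (r ^ j)⁻¹ < 1 := inv_lt_one_of_one_lt₀ hrj
      have hy0 : (0:ℝ) < (r ^ j)⁻¹ := by positivity
      have hrw : ∀ n : ℕ, a n j = (c j * ((r - 1) * x) ^ j * (r ^ j)⁻¹) * ((r ^ j)⁻¹) ^ n := by
        intro n
        rw [ha_def]
        simp only
        rw [div_pow, ← pow_mul, mul_comm (n + 1) j, pow_mul]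
        rw [div_eq_mul_inv, ← inv_pow, pow_succ]
        ring
      rw [tsum_congr hrw, tsum_mul_left, tsum_geometric_of_lt_one hy0.le hy1]
      have hne : r ^ j - 1 ≠ 0 := by linarith
      field_simp
      try ring
  have hmarg : Summable (fun n : ℕ => ∑' j : ℕ, a n j) := hsa.prod
  have hswap : (∑' n : ℕ, ∑' j : ℕ, a n j)
      = ∑' j : ℕ, c j * ((r - 1) * x) ^ j / (r ^ j - 1) := by
    rw [← Summable.tsum_comm (f := a) hsa]
    exact tsum_congr hj_tsum
  have hhs : HasSum (fun n : ℕ => ∑' j : ℕ, a n j)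
      (∑' j : ℕ, c j * ((r - 1) * x) ^ j / (r ^ j - 1)) := by
    rw [← hswap]; exact hmarg.hasSum
  have hprod := hhs.rexp
  have hfun : (fun n : ℕ => f ((r - 1) * x / r ^ (n + 1)))
      = fun n : ℕ => Real.exp (∑' j : ℕ, a n j) :=
    funext fun n => hf _ (huR n)
  rw [hfun]
  exact hprod.tprod_eq

/-- Per-`r` estimate of the closed-form sum against `c 1 * x`. -/
lemma aux_bound_tfc (c : ℕ → ℝ) (hc0 : c 0 = 0) (R : ℝ) (hR : 0 < R)
    (M : ℝ) (hM0 : 0 ≤ M) (hcb : ∀ j, |c j| ≤ M * (2 / R) ^ j)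
    (x r : ℝ) (hr : 1 < r) (hsx : (r - 1) * |x| < R / 4) :
    |(∑' j : ℕ, c j * ((r - 1) * x) ^ j / (r ^ j - 1)) - c 1 * x|
      ≤ 8 * M * x ^ 2 / R ^ 2 * (r - 1) := by
  have hr1 : (0:ℝ) < r - 1 := by linarith
  set s := (r - 1) * |x| with hs_def
  have hs0 : 0 ≤ s := by positivity
  set q := 2 * s / R with hq_def
  have hq0 : 0 ≤ q := by positivity
  have hq1 : q < 1 / 2 := by rw [hq_def, div_lt_iff₀ hR]; nlinarith
  set T : ℕ → ℝ := fun j => c j * ((r - 1) * x) ^ j / (r ^ j - 1) with hT_def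
  have habs_rx : |(r - 1) * x| = s := by rw [hs_def, abs_mul, abs_of_pos hr1]
  have hTb : ∀ j : ℕ, |T j| ≤ M * q ^ j / (r - 1) := by
    intro j
    rcases Nat.eq_zero_or_pos j with hj | hj
    · simp only [hj, hT_def, hc0, pow_zero, zero_mul, zero_div, abs_zero]
      positivity
    · have hrj : r ≤ r ^ j := le_self_pow₀ (by linarith) hj.ne'
      have hden : r - 1 ≤ r ^ j - 1 := by linarith
      have hdenpos : (0:ℝ) < r ^ j - 1 := by linarith
      have h1 : |T j| = |c j| * s ^ j / (r ^ j - 1) := by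
        rw [hT_def]
        simp only
        rw [abs_div, abs_mul, abs_pow, habs_rx, abs_of_pos hdenpos]
      have h2 : |c j| * s ^ j ≤ M * q ^ j := by
        calc |c j| * s ^ j ≤ (M * (2 / R) ^ j) * s ^ j :=
              mul_le_mul_of_nonneg_right (hcb j) (by positivity)
          _ = M * q ^ j := by
              rw [mul_assoc, ← mul_pow, hq_def]
              congr 2
              field_simp
              try ring
      rw [h1]
      exact div_le_div₀ (by positivity) h2 hr1 hden
  have hgeo : Summable (fun j : ℕ => M * q ^ j / (r - 1)) :=
    ((summable_geometric_of_lt_one hq0 (by linarith)).mul_left M).div_const _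
  have hT : Summable T :=
    Summable.of_abs (Summable.of_nonneg_of_le (fun j => abs_nonneg _) hTb hgeo)
  have hT1 : Summable (fun j : ℕ => T (j + 1)) := (summable_nat_add_iff 1).2 hT
  have hT0 : T 0 = 0 := by simp [hT_def, hc0]
  have hT1v : T 1 = c 1 * x := by
    rw [hT_def]
    simp only [pow_one]
    rw [mul_div_assoc, mul_div_assoc]
    congr 1
    field_simp
  have hsplit : (∑' j : ℕ, T j) - c 1 * x = ∑' j : ℕ, T (j + 1 + 1) := by
    rw [Summable.tsum_eq_zero_add hT, Summable.tsum_eq_zero_add hT1, hT0]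
    have : T (0 + 1) = c 1 * x := by simpa using hT1v
    rw [this]
    ring
  have hTb2 : ∀ j : ℕ, |T (j + 1 + 1)| ≤ (M * q ^ 2 / (r - 1)) * q ^ j := by
    intro j
    calc |T (j + 1 + 1)| ≤ M * q ^ (j + 1 + 1) / (r - 1) := hTb _
      _ = (M * q ^ 2 / (r - 1)) * q ^ j := by ring
  have hgeo2 : Summable (fun j : ℕ => (M * q ^ 2 / (r - 1)) * q ^ j) :=
    (summable_geometric_of_lt_one hq0 (by linarith)).mul_left _
  have habs2 : Summable (fun j : ℕ => |T (j + 1 + 1)|) :=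
    Summable.of_nonneg_of_le (fun j => abs_nonneg _) hTb2 hgeo2
  have hsum2 : |∑' j : ℕ, T (j + 1 + 1)| ≤ (M * q ^ 2 / (r - 1)) * (1 - q)⁻¹ := by
    calc |∑' j : ℕ, T (j + 1 + 1)| ≤ ∑' j : ℕ, |T (j + 1 + 1)| := by
          simpa [Real.norm_eq_abs] using
            norm_tsum_le_tsum_norm (f := fun j : ℕ => T (j + 1 + 1))
              (by simpa [Real.norm_eq_abs] using habs2)
      _ ≤ ∑' j : ℕ, (M * q ^ 2 / (r - 1)) * q ^ j := Summable.tsum_le_tsum hTb2 habs2 hgeo2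
      _ = (M * q ^ 2 / (r - 1)) * ∑' j : ℕ, q ^ j := tsum_mul_left
      _ = (M * q ^ 2 / (r - 1)) * (1 - q)⁻¹ := by
          rw [tsum_geometric_of_lt_one hq0 (by linarith)]
  have hinv : (1 - q)⁻¹ ≤ 2 := by
    have h12 : (1:ℝ) / 2 ≤ 1 - q := by linarith
    calc (1 - q)⁻¹ ≤ ((1:ℝ) / 2)⁻¹ := inv_anti₀ (by norm_num) h12
      _ = 2 := by norm_num
  have hq2 : q ^ 2 = 4 * (r - 1) ^ 2 * x ^ 2 / R ^ 2 := by
    rw [hq_def, hs_def, div_pow, mul_pow, mul_pow, sq_abs]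
    ring
  have hfin : (M * q ^ 2 / (r - 1)) * (1 - q)⁻¹ ≤ 8 * M * x ^ 2 / R ^ 2 * (r - 1) := by
    have hnn : 0 ≤ M * q ^ 2 / (r - 1) := by positivity
    calc (M * q ^ 2 / (r - 1)) * (1 - q)⁻¹ ≤ (M * q ^ 2 / (r - 1)) * 2 :=
          mul_le_mul_of_nonneg_left hinv hnn
      _ = 8 * M * x ^ 2 / R ^ 2 * (r - 1) := by
          rw [hq2]
          field_simp
          ring
  rw [hsplit]
  exact le_trans hsum2 hfin

theorem tendsto_first_component
    (c : ℕ → ℝ) (hc0 : c 0 = 0) (R : ℝ) (hR : 0 < R)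
    (hsum : ∀ t : ℝ, |t| < R → Summable fun j : ℕ => c j * t ^ j)
    (f : ℝ → ℝ) (hf : ∀ t : ℝ, |t| < R → f t = Real.exp (∑' j : ℕ, c j * t ^ j))
    (x : ℝ) :
    Tendsto
      (fun r : ℝ => ∏' n : ℕ, f ((r - 1) * x / r ^ (n + 1)))
      (𝓝[>] (1 : ℝ)) (𝓝 (Real.exp (c 1 * x))) := by
  -- extract a bound `M` on the coefficients from summability at `R / 2`
  have hhalf : |R / 2| < R := by rw [abs_of_pos (by linarith)]; linarith
  have hS := hsum (R / 2) hhalf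
  obtain ⟨M, hM⟩ := hS.tendsto_atTop_zero.abs.bddAbove_range
  have hMb : ∀ j : ℕ, |c j * (R / 2) ^ j| ≤ M := fun j => hM (Set.mem_range_self j)
  have hM0 : 0 ≤ M := le_trans (abs_nonneg _) (hMb 0)
  have hcb : ∀ j : ℕ, |c j| ≤ M * (2 / R) ^ j := by
    intro j
    have hp : (0:ℝ) < (R / 2) ^ j := by positivity
    have h := hMb j
    rw [abs_mul, abs_pow, abs_of_pos (by linarith : (0:ℝ) < R / 2)] at h
    have hinv : (2 / R) ^ j = ((R / 2) ^ j)⁻¹ := by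
      rw [← inv_pow, inv_div]
    rw [hinv, ← div_eq_mul_inv, le_div_iff₀ hp]
    exact h
  set δ := R / (4 * (|x| + 1)) with hδ
  have hδ0 : 0 < δ := by positivity
  have hmem : Set.Ioo (1:ℝ) (1 + δ) ∈ 𝓝[>] (1:ℝ) :=
    Ioo_mem_nhdsGT_of_mem ⟨le_refl 1, by linarith⟩
  have hcond : ∀ r ∈ Set.Ioo (1:ℝ) (1 + δ), 1 < r ∧ (r - 1) * |x| < R / 4 := by
    rintro r ⟨h1, h2⟩
    refine ⟨h1, ?_⟩
    have hx1 : (0:ℝ) < |x| + 1 := by positivity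
    have h3 : (r - 1) * (|x| + 1) < δ * (|x| + 1) :=
      mul_lt_mul_of_pos_right (by linarith) hx1
    have h4 : δ * (|x| + 1) = R / 4 := by
      rw [hδ]
      field_simp
    nlinarith [abs_nonneg x]
  have hK : Tendsto (fun r : ℝ => 8 * M * x ^ 2 / R ^ 2 * (r - 1)) (𝓝[>] (1:ℝ)) (𝓝 0) := by
    have h1 : Tendsto (fun r : ℝ => 8 * M * x ^ 2 / R ^ 2 * (r - 1)) (𝓝 (1:ℝ))
        (𝓝 (8 * M * x ^ 2 / R ^ 2 * ((1:ℝ) - 1))) :=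
      (tendsto_id.sub_const 1).const_mul _
    have h2 : Tendsto (fun r : ℝ => 8 * M * x ^ 2 / R ^ 2 * (r - 1)) (𝓝[>] (1:ℝ))
        (𝓝 (8 * M * x ^ 2 / R ^ 2 * ((1:ℝ) - 1))) :=
      h1.mono_left nhdsWithin_le_nhds
    simpa using h2
  have hg0 : Tendsto
      (fun r : ℝ => (∑' j : ℕ, c j * ((r - 1) * x) ^ j / (r ^ j - 1)) - c 1 * x)
      (𝓝[>] (1:ℝ)) (𝓝 0) := by
    apply squeeze_zero_norm' _ hK
    filter_upwards [hmem] with r hrm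
    obtain ⟨h1, h2⟩ := hcond r hrm
    simpa [Real.norm_eq_abs] using aux_bound_tfc c hc0 R hR M hM0 hcb x r h1 h2
  have hg : Tendsto (fun r : ℝ => ∑' j : ℕ, c j * ((r - 1) * x) ^ j / (r ^ j - 1))
      (𝓝[>] (1:ℝ)) (𝓝 (c 1 * x)) := by
    have := hg0.add_const (c 1 * x)
    simpa using this
  have hexp : Tendsto
      (fun r : ℝ => Real.exp (∑' j : ℕ, c j * ((r - 1) * x) ^ j / (r ^ j - 1)))
      (𝓝[>] (1:ℝ)) (𝓝 (Real.exp (c 1 * x))) :=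
    (Real.continuous_exp.tendsto _).comp hg
  apply hexp.congr'
  filter_upwards [hmem] with r hrm
  obtain ⟨h1, h2⟩ := hcond r hrm
  exact (aux_eq_tfc c hc0 R hR f hf M hM0 hcb x r h1 h2).symm
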